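/- arXiv:2011.06563 — 2 statements merged into one kernel-verified Lean document; each statement's English description precedes it below -/
import Mathlib

section
/- Let K be a field, let V and W be finite-dimensional K-vector spaces, and let f : V → V and g : W → W be K-linear endomorphisms. Let α, β ∈ K with β ≠ 0. Suppose there exists a vector v ∈ V with (f − α)²(v) = 0 but (f − α)(v) ≠ 0 (i.e. the eigenvalue α of f is not semisimple), and suppose β is an eigenvalue of g. Then the eigenvalue α·β of the endomorphism f ⊗ g of V ⊗[K] W is not semisimple: there exists a vector u ∈ V ⊗[K] W with ((f ⊗ g) − αβ)²(u) = 0 but ((f ⊗ g) − αβ)(u) ≠ 0. (This is the key step in the paper's Lemma deducing semisimplicity of Frobenius on H*(X) from the semisimplicity of the eigenvalue 1 on H*(X×X).) -/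
open TensorProduct

lemma tmul_ne_zero_aux {K V W : Type*} [Field K]
    [AddCommGroup V] [Module K V] [AddCommGroup W] [Module K W]
    {x : V} {y : W} (hx : x ≠ 0) (hy : y ≠ 0) : x ⊗ₜ[K] y ≠ 0 := by
  intro h
  have hx' := mt (Module.forall_dual_apply_eq_zero_iff K x).mp hx
  have hy' := mt (Module.forall_dual_apply_eq_zero_iff K y).mp hy
  push_neg at hx' hy'
  obtain ⟨φ, hφ⟩ := hx'
  obtain ⟨ψ, hψ⟩ := hy'
  have := congrArg (TensorProduct.lift ((LinearMap.mul K K).compl₁₂ φ ψ)) h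
  simp only [TensorProduct.lift.tmul, LinearMap.compl₁₂_apply, LinearMap.mul_apply',
    map_zero] at this
  exact mul_ne_zero hφ hψ this

/-- If the eigenvalue `α` of `f` is not semisimple (there is `v` with
`(f - α)^2 v = 0` but `(f - α) v ≠ 0`), `β ≠ 0` is an eigenvalue of `g`,
then the eigenvalue `α * β` of `f ⊗ g` is not semisimple: there is `u` with
`((f ⊗ g) - αβ)^2 u = 0` but `((f ⊗ g) - αβ) u ≠ 0`. -/
theorem tensorProduct_map_eigenvalue_not_semisimple
    {K V W : Type*} [Field K]
    [AddCommGroup V] [Module K V] [AddCommGroup W] [Module K W]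
    [FiniteDimensional K V] [FiniteDimensional K W]
    (f : Module.End K V) (g : Module.End K W) (α β : K) (hβ0 : β ≠ 0)
    (hv : ∃ v : V, ((f - α • (1 : Module.End K V)) ^ 2) v = 0 ∧
      (f - α • (1 : Module.End K V)) v ≠ 0)
    (hβ : g.HasEigenvalue β) :
    ∃ u : V ⊗[K] W,
      (((TensorProduct.map f g : Module.End K (V ⊗[K] W))
          - (α * β) • (1 : Module.End K (V ⊗[K] W))) ^ 2) u = 0 ∧
      ((TensorProduct.map f g : Module.End K (V ⊗[K] W))
          - (α * β) • (1 : Module.End K (V ⊗[K] W))) u ≠ 0 := by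
  obtain ⟨v, hv2, hv1⟩ := hv
  obtain ⟨w, hw, hw0⟩ := hβ.exists_hasEigenvector
  have hgw : g w = β • w := Module.End.mem_eigenspace_iff.mp hw
  set T : Module.End K (V ⊗[K] W) :=
    (TensorProduct.map f g : Module.End K (V ⊗[K] W))
      - (α * β) • (1 : Module.End K (V ⊗[K] W)) with hT
  have key : ∀ x : V, T (x ⊗ₜ[K] w) = β • ((f - α • 1) x ⊗ₜ[K] w) := by
    intro x
    simp only [hT, LinearMap.sub_apply, LinearMap.smul_apply, Module.End.one_apply,
      TensorProduct.map_tmul, hgw, LinearMap.sub_apply, LinearMap.smul_apply,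
      Module.End.one_apply, TensorProduct.sub_tmul, TensorProduct.smul_tmul',
      TensorProduct.tmul_smul, smul_smul, mul_comm]
    simp [smul_sub, TensorProduct.smul_tmul', smul_smul, mul_comm]
  refine ⟨v ⊗ₜ[K] w, ?_, ?_⟩
  · have : (T ^ 2) (v ⊗ₜ[K] w) = (β * β) • ((((f - α • (1 : Module.End K V)) ^ 2) v) ⊗ₜ[K] w) := by
      rw [pow_two, Module.End.mul_apply, key, map_smul, key, pow_two,
        Module.End.mul_apply, smul_smul]
    rw [this, hv2, TensorProduct.zero_tmul, smul_zero]
  · rw [key]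
    exact smul_ne_zero hβ0 (tmul_ne_zero_aux hv1 hw0)
end

section
/- Let K be an algebraically closed field, let V be a nonzero finite-dimensional K-vector space, and let f : V → V be a bijective K-linear endomorphism. Assume: (i) for every eigenvalue α of f, the inverse α⁻¹ is also an eigenvalue of f; and (ii) the eigenvalue 1 of the endomorphism f ⊗ f of V ⊗[K] V is semisimple, in the sense that the generalized eigenspace of f ⊗ f for the eigenvalue 1 equals the eigenspace of f ⊗ f for the eigenvalue 1. Then f is semisimple: for every μ ∈ K, the generalized eigenspace of f for μ equals the eigenspace of f for μ (equivalently, f is diagonalizable). (This is the linear-algebra content of the paper's Lemma: for a variety X over a finite field, the conjecture S(X×X,ℓ) — semisimplicity of the eigenvalue 1 of Frobenius on the cohomology of X×X — together with the Künneth formula and Poincaré duality, implies that Frobenius acts semisimply on the ℓ-adic étale cohomology of X.) -/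
open TensorProduct

/-- Let `K` be algebraically closed, `V` a nonzero finite-dimensional
`K`-vector space, and `f : V → V` a bijective `K`-linear endomorphism such
that (i) for every eigenvalue `α` of `f`, `α⁻¹` is also an eigenvalue of `f`,
and (ii) the generalized eigenspace of `f ⊗ f` for the eigenvalue `1` equals
its eigenspace for `1`. Then `f` is semisimple: for every `μ : K` the
generalized eigenspace of `f` for `μ` equals the eigenspace of `f` for `μ`. -/
theorem semisimple_of_tensor_self_eigenvalue_one_semisimple
    {K V : Type*} [Field K] [IsAlgClosed K]
    [AddCommGroup V] [Module K V] [FiniteDimensional K V] [Nontrivial V]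
    (f : Module.End K V) (hf : Function.Bijective f)
    (hinv : ∀ α : K, f.HasEigenvalue α → f.HasEigenvalue α⁻¹)
    (hss : Module.End.maxGenEigenspace
        (TensorProduct.map f f : Module.End K (V ⊗[K] V)) 1
      = Module.End.eigenspace
        (TensorProduct.map f f : Module.End K (V ⊗[K] V)) 1) :
    ∀ μ : K, f.maxGenEigenspace μ = f.eigenspace μ := by
  intro μ
  refine le_antisymm ?_ ?easy
  case easy =>
    intro x hx
    rw [Module.End.mem_maxGenEigenspace]
    rw [Module.End.mem_eigenspace_iff] at hx
    exact ⟨1, by simp [hx, sub_eq_zero]⟩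
  intro x hx
  rw [Module.End.mem_maxGenEigenspace] at hx
  rw [Module.End.mem_eigenspace_iff]
  by_contra hne
  set N : Module.End K V := f - μ • 1 with hN
  have hNx : N x ≠ 0 := by
    intro h
    apply hne
    have h2 : f x - μ • x = 0 := by simpa [hN] using h
    rw [sub_eq_zero] at h2
    exact h2
  classical
  have hex : ∃ n, (N ^ n) x = 0 := hx
  set m := Nat.find hex with hm
  have hm0 : (N ^ m) x = 0 := Nat.find_spec hex
  have hm2 : 2 ≤ m := by
    by_contra h
    push_neg at h
    interval_cases m
    · exact hNx (by simp at hm0; simp [hm0])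
    · exact hNx (by simpa using hm0)
  set w := (N ^ (m - 2)) x with hw
  set v := (N ^ (m - 1)) x with hv
  have hvne : v ≠ 0 := Nat.find_min hex (by omega)
  have hNw : N w = v := by
    rw [hw, hv, ← Module.End.mul_apply, ← pow_succ']
    congr 2
    omega
  have hNv : N v = 0 := by
    rw [hv, ← Module.End.mul_apply, ← pow_succ']
    have h : m - 1 + 1 = m := by omega
    rw [h]; exact hm0
  have hfv : f v = μ • v := by
    have h : f v - μ • v = 0 := by simpa [hN] using hNv
    rwa [sub_eq_zero] at h
  have hfw : f w = μ • w + v := by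
    have h : f w - μ • w = v := by simpa [hN] using hNw
    rw [← h]; abel
  have hμ : μ ≠ 0 := by
    intro h
    apply hvne
    apply hf.injective
    simp [hfv, h]
  have heig : f.HasEigenvalue μ :=
    Module.End.hasEigenvalue_of_hasEigenvector
      ⟨Module.End.mem_eigenspace_iff.mpr hfv, hvne⟩
  obtain ⟨u, hu⟩ := (hinv μ heig).exists_hasEigenvector
  have hfu : f u = μ⁻¹ • u := hu.apply_eq_smul
  have hune : u ≠ 0 := hu.right
  set g : Module.End K (V ⊗[K] V) := TensorProduct.map f f with hg
  have hgv : g (v ⊗ₜ[K] u) = v ⊗ₜ[K] u := by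
    rw [hg, TensorProduct.map_tmul, hfv, hfu, TensorProduct.smul_tmul_smul,
      mul_inv_cancel₀ hμ, one_smul]
  have hgw : g (w ⊗ₜ[K] u) = w ⊗ₜ[K] u + μ⁻¹ • (v ⊗ₜ[K] u) := by
    rw [hg, TensorProduct.map_tmul, hfw, hfu, TensorProduct.add_tmul,
      TensorProduct.smul_tmul_smul, mul_inv_cancel₀ hμ, one_smul,
      TensorProduct.tmul_smul]
  set M : Module.End K (V ⊗[K] V) := g - (1:K) • 1 with hM
  have h1 : M (w ⊗ₜ[K] u) = μ⁻¹ • (v ⊗ₜ[K] u) := by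
    simp only [hM, LinearMap.sub_apply, LinearMap.smul_apply, Module.End.one_apply, one_smul, hgw]
    abel
  have h2 : M (v ⊗ₜ[K] u) = 0 := by
    simp only [hM, LinearMap.sub_apply, LinearMap.smul_apply, Module.End.one_apply, one_smul, hgv,
      sub_self]
  have hmem : w ⊗ₜ[K] u ∈ Module.End.maxGenEigenspace g 1 := by
    rw [Module.End.mem_maxGenEigenspace]
    refine ⟨2, ?_⟩
    show (M ^ 2) (w ⊗ₜ[K] u) = 0
    rw [pow_two, Module.End.mul_apply, h1, map_smul, h2, smul_zero]
  rw [hss, Module.End.mem_eigenspace_iff, one_smul, hgw] at hmem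
  have hvu : v ⊗ₜ[K] u = 0 := by
    have h : μ⁻¹ • (v ⊗ₜ[K] u) = 0 := add_eq_left.mp hmem
    rcases smul_eq_zero.mp h with h' | h'
    · exact absurd h' (inv_ne_zero hμ)
    · exact h'
  -- v ⊗ u ≠ 0
  obtain ⟨φ, hφ⟩ : ∃ φ : Module.Dual K V, φ v ≠ 0 := by
    by_contra h
    push_neg at h
    exact hvne ((Module.forall_dual_apply_eq_zero_iff K v).mp h)
  obtain ⟨ψ, hψ⟩ : ∃ ψ : Module.Dual K V, ψ u ≠ 0 := by
    by_contra h
    push_neg at h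
    exact hune ((Module.forall_dual_apply_eq_zero_iff K u).mp h)
  have hz := congrArg (TensorProduct.lift ((LinearMap.mul K K).compl₁₂ φ ψ)) hvu
  simp only [map_zero, TensorProduct.lift.tmul, LinearMap.compl₁₂_apply,
    LinearMap.mul_apply'] at hz
  rcases mul_eq_zero.mp hz with h' | h'
  · exact hφ h'
  · exact hψ h'
end
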